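/- Summation by parts estimate for the second term: Let $(X_n)$ be an almost increasing positive sequence, $(\lambda_n)$ a sequence with $|\lambda_n| X_n = O(1)$ and $\sum_{n=1}^{\infty} |\Delta \lambda_n| X_n < \infty$, and $(b_n)$ a nonnegative sequence with $\sum_{v=1}^{m} b_v = O(X_m)$. Then for $k \geq 1$, $\sum_{n=1}^{m} |\lambda_n|^k b_n = O(1)$ as $m \to \infty$. -/

import Mathlib

def AlmostIncreasing (b : ℕ → ℝ) : Prop :=
  ∃ (c : ℕ → ℝ) (A B : ℝ), 0 < A ∧ 0 < B ∧ (∀ n, 0 < c n) ∧ StrictMono c ∧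
    ∀ n, A * c n ≤ b n ∧ b n ≤ B * c n

/-- If `X` is almost increasing, `|λ_n| X_n = O(1)`, `∑ |Δλ_n| X_n < ∞`, and `b ≥ 0` with
`∑_{v≤m} b_v = O(X_m)`, then for `k ≥ 1`, `∑_{n≤m} |λ_n|^k b_n = O(1)`. -/
theorem abel_estimate_second (X lam b : ℕ → ℝ) (k : ℝ) (hX : AlmostIncreasing X)
    (hlamX : ∃ C : ℝ, ∀ n, |lam n| * X n ≤ C)
    (hΔ : Summable (fun n : ℕ => |lam n - lam (n + 1)| * X n))
    (hb : ∀ n, 0 ≤ b n)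
    (hbX : ∃ C : ℝ, ∀ m : ℕ, 1 ≤ m → (∑ v ∈ Finset.Icc 1 m, b v) ≤ C * X m)
    (hk : 1 ≤ k) :
    ∃ D : ℝ, ∀ m : ℕ, (∑ n ∈ Finset.Icc 1 m, |lam n| ^ k * b n) ≤ D := by
  obtain ⟨c, A, B, hA, hB, hc, hcmono, hcb⟩ := hX
  obtain ⟨C₁, hC₁⟩ := hlamX
  obtain ⟨C₂, hC₂⟩ := hbX
  have hX0 : ∀ n, 0 < X n := fun n =>
    lt_of_lt_of_le (mul_pos hA (hc n)) (hcb n).1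
  have hC₁0 : 0 ≤ C₁ := le_trans (mul_nonneg (abs_nonneg _) (hX0 0).le) (hC₁ 0)
  have hC₂0 : 0 ≤ C₂ := by
    have h1 := hC₂ 1 le_rfl
    simp only [Finset.Icc_self, Finset.sum_singleton] at h1
    nlinarith [hb 1, hX0 1]
  have hXlb : ∀ n, A * c 0 ≤ X n := fun n =>
    le_trans (by nlinarith [hcmono.monotone (Nat.zero_le n), hc 0] : A * c 0 ≤ A * c n) (hcb n).1
  set M : ℝ := max (C₁ / (A * c 0)) 1 with hM
  have hM1 : (1:ℝ) ≤ M := le_max_right _ _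
  have hM0 : (0:ℝ) < M := lt_of_lt_of_le one_pos hM1
  have hlamM : ∀ n, |lam n| ≤ M := by
    intro n
    have hpos : (0:ℝ) < A * c 0 := mul_pos hA (hc 0)
    have : |lam n| ≤ C₁ / (A * c 0) := by
      rw [le_div_iff₀ hpos]
      calc |lam n| * (A * c 0) ≤ |lam n| * X n :=
            mul_le_mul_of_nonneg_left (hXlb n) (abs_nonneg _)
        _ ≤ C₁ := hC₁ n
    exact this.trans (le_max_left _ _)
  have hrpow : ∀ t : ℝ, 0 ≤ t → t ≤ M → t ^ k ≤ M ^ (k - 1) * t := by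
    intro t ht htM
    rcases eq_or_lt_of_le ht with h | h
    · rw [← h, Real.zero_rpow (by linarith : k ≠ 0), mul_zero]
    · have h1 : t ^ (k - 1) * t = t ^ k := by
        rw [Real.rpow_sub h, Real.rpow_one, div_mul_cancel₀ _ (ne_of_gt h)]
      rw [← h1]
      exact mul_le_mul_of_nonneg_right (Real.rpow_le_rpow ht htM (by linarith)) ht
  set S : ℝ := ∑' n, |lam n - lam (n + 1)| * X n with hS
  have hS0 : 0 ≤ S := tsum_nonneg fun n => mul_nonneg (abs_nonneg _) (hX0 n).le
  -- reindexing Icc 1 m as a range sum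
  have hre : ∀ f : ℕ → ℝ, ∀ j : ℕ, (∑ n ∈ Finset.Icc 1 j, f n) =
      ∑ i ∈ Finset.range j, f (1 + i) := by
    intro f j
    rw [← Finset.Ico_add_one_right_eq_Icc, Finset.sum_Ico_eq_sum_range]
    simp
  -- key: first-power bound
  have key : ∀ m : ℕ, (∑ n ∈ Finset.Icc 1 m, |lam n| * b n) ≤ C₂ * C₁ + C₂ * S := by
    intro m
    rcases Nat.eq_zero_or_pos m with rfl | hm
    · simp
      positivity
    rw [hre]
    have habel := Finset.sum_range_by_parts (fun i => |lam (1 + i)|) (fun i => b (1 + i)) m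
    simp only [smul_eq_mul] at habel
    rw [habel]
    have hG : ∀ j : ℕ, 1 ≤ j → (∑ i ∈ Finset.range j, b (1 + i)) ≤ C₂ * X j := by
      intro j hj
      rw [← hre b j]
      exact hC₂ j hj
    have hGnn : ∀ j : ℕ, 0 ≤ ∑ i ∈ Finset.range j, b (1 + i) :=
      fun j => Finset.sum_nonneg fun i _ => hb _
    have h1m : 1 + (m - 1) = m := by omega
    have term1 : |lam (1 + (m - 1))| * (∑ i ∈ Finset.range m, b (1 + i)) ≤ C₂ * C₁ := by
      rw [h1m]
      calc |lam m| * (∑ i ∈ Finset.range m, b (1 + i)) ≤ |lam m| * (C₂ * X m) :=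
            mul_le_mul_of_nonneg_left (hG m hm) (abs_nonneg _)
        _ = C₂ * (|lam m| * X m) := by ring
        _ ≤ C₂ * C₁ := mul_le_mul_of_nonneg_left (hC₁ m) hC₂0
    have term2 : |∑ i ∈ Finset.range (m - 1),
        (|lam (1 + (i + 1))| - |lam (1 + i)|) * ∑ j ∈ Finset.range (i + 1), b (1 + j)|
        ≤ C₂ * S := by
      calc |∑ i ∈ Finset.range (m - 1),
            (|lam (1 + (i + 1))| - |lam (1 + i)|) * ∑ j ∈ Finset.range (i + 1), b (1 + j)|
          ≤ ∑ i ∈ Finset.range (m - 1),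
            |(|lam (1 + (i + 1))| - |lam (1 + i)|) * ∑ j ∈ Finset.range (i + 1), b (1 + j)| :=
            Finset.abs_sum_le_sum_abs _ _
        _ ≤ ∑ i ∈ Finset.range (m - 1),
            |lam (1 + i) - lam (1 + i + 1)| * (C₂ * X (1 + i)) := by
            apply Finset.sum_le_sum
            intro i _
            rw [abs_mul, abs_of_nonneg (hGnn (i + 1))]
            have h2 : |(|lam (1 + (i + 1))| - |lam (1 + i)|)| ≤ |lam (1 + i) - lam (1 + i + 1)| := by
              rw [abs_sub_comm (lam (1 + i))]
              have := abs_abs_sub_abs_le_abs_sub (lam (1 + (i + 1))) (lam (1 + i))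
              simpa [add_assoc] using this
            have h3 : (∑ j ∈ Finset.range (i + 1), b (1 + j)) ≤ C₂ * X (1 + i) := by
              have := hG (i + 1) (by omega)
              simpa [add_comm 1 i] using this
            exact mul_le_mul h2 h3 (hGnn (i + 1)) (abs_nonneg _)
        _ = C₂ * ∑ i ∈ Finset.range (m - 1), |lam (1 + i) - lam (1 + i + 1)| * X (1 + i) := by
            rw [Finset.mul_sum]; apply Finset.sum_congr rfl; intro i _; ring
        _ ≤ C₂ * S := by
            apply mul_le_mul_of_nonneg_left _ hC₂0
            have hrw : (∑ i ∈ Finset.range (m - 1), |lam (1 + i) - lam (1 + i + 1)| * X (1 + i))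
                = ∑ n ∈ Finset.Ico 1 m, |lam n - lam (n + 1)| * X n := by
              rw [Finset.sum_Ico_eq_sum_range]
            rw [hrw]
            exact Summable.sum_le_tsum _ (fun n _ => mul_nonneg (abs_nonneg _) (hX0 n).le) hΔ
    have := neg_le_abs (∑ i ∈ Finset.range (m - 1),
        (|lam (1 + (i + 1))| - |lam (1 + i)|) * ∑ j ∈ Finset.range (i + 1), b (1 + j))
    linarith [term1, term2, this]
  -- conclude
  refine ⟨M ^ (k - 1) * (C₂ * C₁ + C₂ * S), fun m => ?_⟩
  have hMk : 0 ≤ M ^ (k - 1) := Real.rpow_nonneg hM0.le _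
  calc (∑ n ∈ Finset.Icc 1 m, |lam n| ^ k * b n)
      ≤ ∑ n ∈ Finset.Icc 1 m, M ^ (k - 1) * (|lam n| * b n) := by
        apply Finset.sum_le_sum
        intro n _
        have := mul_le_mul_of_nonneg_right (hrpow (|lam n|) (abs_nonneg _) (hlamM n)) (hb n)
        linarith [this]
    _ = M ^ (k - 1) * ∑ n ∈ Finset.Icc 1 m, |lam n| * b n := by rw [Finset.mul_sum]
    _ ≤ M ^ (k - 1) * (C₂ * C₁ + C₂ * S) := mul_le_mul_of_nonneg_left (key m) hMk
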